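/- If f : X → ℝ is L-smooth on convex X with minimizer x* ∈ X, and the sequences x̂_t ∈ X, x̂_t* ∈ argmin f_t satisfy Σ_{t=1}^T‖x̂_t − x̂_t*‖² ≤ 4S + 2D² and Σ_{t=1}^T‖∇f_t(x̂_t*)‖² ≤ G, then for every α > 0: Σ_{t=1}^T f_t(x̂_t) − Σ_{t=1}^T f_t(x̂_t*) ≤ G/(2α) + 2(L+α)S + (L+α)D². -/

import Mathlib

open Finset

/-- summing the per-round smoothness bound and using the given bounds on
the squared-error and gradient-norm sums yields the regret bound
`G/(2α) + 2(L+α)S + (L+α)D²`. -/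
theorem smooth_dynamic_regret_sum_bound
    {n : ℕ} (X : Set (EuclideanSpace ℝ (Fin n))) (hXconv : Convex ℝ X)
    (T : ℕ) (f : ℕ → EuclideanSpace ℝ (Fin n) → ℝ)
    (g : ℕ → EuclideanSpace ℝ (Fin n) → EuclideanSpace ℝ (Fin n))
    (hdiff : ∀ t ∈ Icc 1 T, ∀ x ∈ X, HasGradientAt (f t) (g t x) x)
    (L : ℝ) (hL : 0 < L)
    (hsmooth : ∀ t ∈ Icc 1 T, ∀ x ∈ X, ∀ y ∈ X,
      f t y ≤ f t x + (inner ℝ (g t x) (y - x) : ℝ) + L / 2 * ‖y - x‖ ^ 2)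
    (x xstar : ℕ → EuclideanSpace ℝ (Fin n))
    (hx : ∀ t ∈ Icc 1 T, x t ∈ X)
    (hxstar : ∀ t ∈ Icc 1 T, xstar t ∈ X ∧ ∀ y ∈ X, f t (xstar t) ≤ f t y)
    (S D G : ℝ) (hS : 0 ≤ S) (hD : 0 ≤ D) (hG : 0 ≤ G)
    (hSsum : ∑ t ∈ Icc 1 T, ‖x t - xstar t‖ ^ 2 ≤ 4 * S + 2 * D ^ 2)
    (hGsum : ∑ t ∈ Icc 1 T, ‖g t (xstar t)‖ ^ 2 ≤ G)
    (α : ℝ) (hα : 0 < α) :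
    ∑ t ∈ Icc 1 T, f t (x t) - ∑ t ∈ Icc 1 T, f t (xstar t)
      ≤ G / (2 * α) + 2 * (L + α) * S + (L + α) * D ^ 2 := by
  have key : ∀ t ∈ Icc 1 T, f t (x t) - f t (xstar t)
      ≤ ‖g t (xstar t)‖ ^ 2 / (2 * α) + (L + α) / 2 * ‖x t - xstar t‖ ^ 2 := by
    intro t ht
    have hsm := hsmooth t ht (xstar t) (hxstar t ht).1 (x t) (hx t ht)
    have hip : (inner ℝ (g t (xstar t)) (x t - xstar t) : ℝ)
        ≤ ‖g t (xstar t)‖ * ‖x t - xstar t‖ := real_inner_le_norm _ _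
    have hamgm : ‖g t (xstar t)‖ * ‖x t - xstar t‖
        ≤ ‖g t (xstar t)‖ ^ 2 / (2 * α) + α / 2 * ‖x t - xstar t‖ ^ 2 := by
      rw [← sub_nonneg]
      have heq : ‖g t (xstar t)‖ ^ 2 / (2 * α) + α / 2 * ‖x t - xstar t‖ ^ 2
          - ‖g t (xstar t)‖ * ‖x t - xstar t‖
          = (‖g t (xstar t)‖ - α * ‖x t - xstar t‖) ^ 2 / (2 * α) := by
        field_simp; ring
      rw [heq]; positivity
    nlinarith [hsm, hip, hamgm]
  calc ∑ t ∈ Icc 1 T, f t (x t) - ∑ t ∈ Icc 1 T, f t (xstar t)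
      = ∑ t ∈ Icc 1 T, (f t (x t) - f t (xstar t)) := (Finset.sum_sub_distrib _ _).symm
    _ ≤ ∑ t ∈ Icc 1 T, (‖g t (xstar t)‖ ^ 2 / (2 * α) + (L + α) / 2 * ‖x t - xstar t‖ ^ 2) :=
        Finset.sum_le_sum key
    _ = (∑ t ∈ Icc 1 T, ‖g t (xstar t)‖ ^ 2) / (2 * α)
        + (L + α) / 2 * ∑ t ∈ Icc 1 T, ‖x t - xstar t‖ ^ 2 := by
        rw [Finset.sum_add_distrib, Finset.sum_div, Finset.mul_sum]
    _ ≤ G / (2 * α) + (L + α) / 2 * (4 * S + 2 * D ^ 2) := by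
        gcongr
    _ = G / (2 * α) + 2 * (L + α) * S + (L + α) * D ^ 2 := by ring
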